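/- Let m, n, l_1, ..., l_m be positive integers with n = l_1 + ... + l_m + 1, and let Δ_{m,n}^{1;L} be the associated multiple chessboard complex. Then every face of cardinality n - 2 (codimension 1) is contained in exactly two maximal faces. -/
import Mathlib

/-- A face of the multiple chessboard complex `Δ_{m,n}^{1;L}`. -/
def IsChessFace (m n : ℕ) (l : Fin m → ℕ) (S : Finset (Fin m × Fin n)) : Prop :=
  (∀ j : Fin n, (S.filter fun x => x.2 = j).card ≤ 1) ∧
  (∀ i : Fin m, (S.filter fun x => x.1 = i).card ≤ l i)

section Aux

variable {m n : ℕ} {l : Fin m → ℕ}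

lemma chess_card_eq_sum_col (S : Finset (Fin m × Fin n)) :
    S.card = ∑ j, (S.filter fun x => x.2 = j).card :=
  Finset.card_eq_sum_card_fiberwise (fun _ _ => Finset.mem_univ _)

lemma chess_card_eq_sum_row (S : Finset (Fin m × Fin n)) :
    S.card = ∑ i, (S.filter fun x => x.1 = i).card :=
  Finset.card_eq_sum_card_fiberwise (fun _ _ => Finset.mem_univ _)

lemma chess_card_le (T : Finset (Fin m × Fin n)) (hT : IsChessFace m n l T) :
    T.card ≤ ∑ i, l i := by
  rw [chess_card_eq_sum_row]
  exact Finset.sum_le_sum fun i _ => hT.2 i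

lemma chess_insert (S : Finset (Fin m × Fin n)) (hS : IsChessFace m n l S)
    (i : Fin m) (j : Fin n)
    (hcol : (S.filter fun x => x.2 = j).card = 0)
    (hrow : (S.filter fun x => x.1 = i).card < l i) :
    IsChessFace m n l (insert (i, j) S) := by
  rw [Finset.card_eq_zero] at hcol
  constructor
  · intro j'
    rw [Finset.filter_insert]
    by_cases hj : j = j'
    · subst hj
      rw [if_pos rfl, hcol]
      simp
    · rw [if_neg hj]
      exact hS.1 j'
  · intro i'
    rw [Finset.filter_insert]
    by_cases hi : i = i'
    · subst hi
      rw [if_pos rfl]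
      calc (insert (i,j) (S.filter fun x => x.1 = i)).card
          ≤ (S.filter fun x => x.1 = i).card + 1 := Finset.card_insert_le _ _
        _ ≤ l i := hrow
    · rw [if_neg hi]
      exact hS.2 i'

lemma chess_notMem (S : Finset (Fin m × Fin n)) (i : Fin m) (j : Fin n)
    (hcol : (S.filter fun x => x.2 = j).card = 0) : (i, j) ∉ S := by
  rw [Finset.card_eq_zero] at hcol
  intro h
  have : (i, j) ∈ S.filter fun x => x.2 = j := Finset.mem_filter.2 ⟨h, rfl⟩
  simp [hcol] at this

/-- extension: a face of card < ∑ l and < n extends. -/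
lemma chess_extend (hsum : n = (∑ i, l i) + 1) (T : Finset (Fin m × Fin n))
    (hT : IsChessFace m n l T) (hlt : T.card < ∑ i, l i) :
    ∃ x ∉ T, IsChessFace m n l (insert x T) := by
  -- find a free column
  have hcardn : T.card < n := by omega
  have hcol : ∃ j : Fin n, (T.filter fun x => x.2 = j).card = 0 := by
    by_contra h
    push_neg at h
    have : n ≤ T.card := by
      calc n = ∑ _j : Fin n, 1 := by simp
        _ ≤ ∑ j, (T.filter fun x => x.2 = j).card :=
            Finset.sum_le_sum fun j _ => Nat.one_le_iff_ne_zero.2 (h j)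
        _ = T.card := (chess_card_eq_sum_col T).symm
    omega
  have hrow : ∃ i : Fin m, (T.filter fun x => x.1 = i).card < l i := by
    by_contra h
    push_neg at h
    have : ∑ i, l i ≤ T.card := by
      rw [chess_card_eq_sum_row]
      exact Finset.sum_le_sum fun i _ => h i
    omega
  obtain ⟨j, hj⟩ := hcol
  obtain ⟨i, hi⟩ := hrow
  exact ⟨(i, j), chess_notMem T i j hj, chess_insert T hT i j hj hi⟩

lemma chess_maximal_iff (hsum : n = (∑ i, l i) + 1) (T : Finset (Fin m × Fin n))
    (hT : IsChessFace m n l T) :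
    (∀ U, IsChessFace m n l U → T ⊆ U → T = U) ↔ T.card = ∑ i, l i := by
  constructor
  · intro hmax
    by_contra h
    have hlt : T.card < ∑ i, l i := lt_of_le_of_ne (chess_card_le T hT) h
    obtain ⟨x, hx, hface⟩ := chess_extend hsum T hT hlt
    have := hmax _ hface (Finset.subset_insert x T)
    exact hx (this ▸ Finset.mem_insert_self x T)
  · intro hc U hU hsub
    exact Finset.eq_of_subset_of_card_le hsub (by rw [hc]; exact chess_card_le U hU)

end Aux

/-- Codimension-one pseudomanifold property: if `n = l_1 + ⋯ + l_m + 1`, every face of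
`Δ_{m,n}^{1;L}` of cardinality `n - 2` is contained in exactly two maximal faces. -/
theorem chessboard_pseudomanifold (m n : ℕ) (hm : 1 ≤ m) (hn : 1 ≤ n) (l : Fin m → ℕ)
    (hl : ∀ i, 1 ≤ l i) (hsum : n = (∑ i, l i) + 1)
    (S : Finset (Fin m × Fin n)) (hS : IsChessFace m n l S) (hcard : S.card = n - 2) :
    {T : Finset (Fin m × Fin n) | IsChessFace m n l T ∧
      (∀ U, IsChessFace m n l U → T ⊆ U → T = U) ∧ S ⊆ T}.ncard = 2 := by
  have hml : m ≤ ∑ i, l i := by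
    calc m = ∑ _i : Fin m, 1 := by simp
      _ ≤ ∑ i, l i := Finset.sum_le_sum fun i _ => hl i
  have hn2 : 2 ≤ n := by omega
  -- unique deficient row i₀
  have hrowsum : ∑ i, (S.filter fun x => x.1 = i).card = n - 2 := by
    rw [← chess_card_eq_sum_row]; exact hcard
  have hex : ∃ i₀ : Fin m, (S.filter fun x => x.1 = i₀).card < l i₀ := by
    by_contra h
    push_neg at h
    have : ∑ i, l i ≤ n - 2 := hrowsum ▸ Finset.sum_le_sum fun i _ => h i
    omega
  obtain ⟨i₀, hi₀⟩ := hex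
  have huniq : ∀ i : Fin m, (S.filter fun x => x.1 = i).card < l i → i = i₀ := by
    intro i hi
    by_contra hne
    have h2 : (l i - (S.filter fun x => x.1 = i).card)
        + (l i₀ - (S.filter fun x => x.1 = i₀).card)
        ≤ ∑ k, (l k - (S.filter fun x => x.1 = k).card) :=
      Finset.add_le_sum (f := fun k => l k - (S.filter fun x => x.1 = k).card) (fun k _ => Nat.zero_le _) (Finset.mem_univ i) (Finset.mem_univ i₀) hne
    have h3 : ∑ k, (l k - (S.filter fun x => x.1 = k).card)
        = (∑ k, l k) - (n - 2) := by
      rw [Finset.sum_tsub_distrib Finset.univ (f := l) (g := fun k => (S.filter fun x => x.1 = k).card) (fun k _ => hS.2 k), hrowsum]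
    omega
  -- the two free columns
  have hinj : Set.InjOn Prod.snd (↑S : Set (Fin m × Fin n)) := by
    intro x hx y hy hxy
    have hx' : x ∈ S.filter fun z => z.2 = x.2 := Finset.mem_filter.2 ⟨Finset.mem_coe.1 hx, rfl⟩
    have hy' : y ∈ S.filter fun z => z.2 = x.2 :=
      Finset.mem_filter.2 ⟨Finset.mem_coe.1 hy, hxy.symm⟩
    exact Finset.card_le_one.1 (hS.1 x.2) x hx' y hy'
  have himg : (S.image Prod.snd).card = n - 2 := by
    rw [Finset.card_image_of_injOn hinj, hcard]
  have hCcard : (Finset.univ \ S.image Prod.snd).card = 2 := by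
    rw [Finset.card_sdiff_of_subset (Finset.subset_univ _), himg, Finset.card_univ, Fintype.card_fin]
    omega
  obtain ⟨j₁, j₂, hjne, hC⟩ := Finset.card_eq_two.1 hCcard
  have hfree : ∀ j : Fin n, j ∈ Finset.univ \ S.image Prod.snd ↔
      (S.filter fun x => x.2 = j).card = 0 := by
    intro j
    rw [Finset.mem_sdiff, Finset.card_eq_zero, Finset.filter_eq_empty_iff]
    constructor
    · intro ⟨_, hj⟩ x hx h
      exact hj (Finset.mem_image.2 ⟨x, hx, h⟩)
    · intro h
      refine ⟨Finset.mem_univ _, fun hj => ?_⟩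
      obtain ⟨x, hx, hxj⟩ := Finset.mem_image.1 hj
      exact h hx hxj
  have hj₁free : (S.filter fun x => x.2 = j₁).card = 0 :=
    (hfree j₁).1 (hC ▸ Finset.mem_insert_self _ _)
  have hj₂free : (S.filter fun x => x.2 = j₂).card = 0 :=
    (hfree j₂).1 (hC ▸ Finset.mem_insert_of_mem (Finset.mem_singleton_self _))
  -- the set equals the pair
  have hset : {T : Finset (Fin m × Fin n) | IsChessFace m n l T ∧
      (∀ U, IsChessFace m n l U → T ⊆ U → T = U) ∧ S ⊆ T}
      = {insert (i₀, j₁) S, insert (i₀, j₂) S} := by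
    ext T
    simp only [Set.mem_setOf_eq, Set.mem_insert_iff, Set.mem_singleton_iff]
    constructor
    · rintro ⟨hTf, hTmax, hTS⟩
      have hTcard : T.card = ∑ i, l i := (chess_maximal_iff hsum T hTf).1 hTmax
      have hsd : (T \ S).card = 1 := by
        rw [Finset.card_sdiff_of_subset hTS, hTcard, hcard]; omega
      obtain ⟨x, hx⟩ := Finset.card_eq_one.1 hsd
      have hxT : x ∈ T := (Finset.mem_sdiff.1 (hx ▸ Finset.mem_singleton_self x)).1
      have hxS : x ∉ S := (Finset.mem_sdiff.1 (hx ▸ Finset.mem_singleton_self x)).2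
      have hTeq : T = insert x S := by
        rw [Finset.insert_eq, Finset.union_comm, ← hx,
          Finset.union_sdiff_of_subset hTS]
      -- x's column is free in S
      have hcolx : (S.filter fun z => z.2 = x.2).card = 0 := by
        have h1 : insert x (S.filter fun z => z.2 = x.2) ⊆ T.filter fun z => z.2 = x.2 := by
          intro y hy
          rcases Finset.mem_insert.1 hy with h | h
          · exact Finset.mem_filter.2 ⟨h ▸ hxT, by rw [h]⟩
          · exact Finset.mem_filter.2 ⟨hTS (Finset.mem_filter.1 h).1, (Finset.mem_filter.1 h).2⟩
        have h2 : x ∉ S.filter fun z => z.2 = x.2 := fun h => hxS (Finset.mem_filter.1 h).1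
        have := Finset.card_le_card h1
        rw [Finset.card_insert_of_notMem h2] at this
        have := hTf.1 x.2
        omega
      -- x's row is the deficient one
      have hrowx : x.1 = i₀ := by
        apply huniq
        have h1 : insert x (S.filter fun z => z.1 = x.1) ⊆ T.filter fun z => z.1 = x.1 := by
          intro y hy
          rcases Finset.mem_insert.1 hy with h | h
          · exact Finset.mem_filter.2 ⟨h ▸ hxT, by rw [h]⟩
          · exact Finset.mem_filter.2 ⟨hTS (Finset.mem_filter.1 h).1, (Finset.mem_filter.1 h).2⟩
        have h2 : x ∉ S.filter fun z => z.1 = x.1 := fun h => hxS (Finset.mem_filter.1 h).1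
        have h3 := Finset.card_le_card h1
        rw [Finset.card_insert_of_notMem h2] at h3
        have h4 := hTf.2 x.1
        omega
      have hxmem : x.2 ∈ Finset.univ \ S.image Prod.snd := (hfree x.2).2 hcolx
      rw [hC] at hxmem
      rcases Finset.mem_insert.1 hxmem with h | h
      · left
        rw [hTeq]
        congr 1
        exact Prod.ext hrowx h
      · right
        rw [hTeq]
        congr 1
        exact Prod.ext hrowx (Finset.mem_singleton.1 h)
    · intro h
      have key : ∀ j : Fin n, (S.filter fun x => x.2 = j).card = 0 →
          IsChessFace m n l (insert (i₀, j) S) ∧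
          (∀ U, IsChessFace m n l U → insert (i₀, j) S ⊆ U → insert (i₀, j) S = U) ∧
          S ⊆ insert (i₀, j) S := by
        intro j hjf
        have hface := chess_insert S hS i₀ j hjf hi₀
        refine ⟨hface, ?_, Finset.subset_insert _ _⟩
        rw [chess_maximal_iff hsum _ hface,
          Finset.card_insert_of_notMem (chess_notMem S i₀ j hjf), hcard]
        omega
      rcases h with h | h <;> subst h
      · exact key j₁ hj₁free
      · exact key j₂ hj₂free
  rw [hset]
  apply Set.ncard_pair
  intro h
  have h1 : (i₀, j₁) ∈ insert (i₀, j₂) S := h ▸ Finset.mem_insert_self _ _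
  rcases Finset.mem_insert.1 h1 with h2 | h2
  · exact hjne (congrArg Prod.snd h2)
  · exact chess_notMem S i₀ j₁ hj₁free h2
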